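/- Fix a positive integer d, constants m, ω > 0, points x₀, p₀ ∈ ℝ^d, a compact set K ⊂ ℝ^d, and a number s with 0 < s < π. Then for all sufficiently large r > 0 and all x ∈ K there exists a complex number θ with |θ| < s satisfying cos θ = r^{-2} (a(x̃₀, p̃₀) · x̃) (where the dot denotes the bilinear product Σ_k a_k x̃_k on ℂ^{d+1}); moreover, if θ and θ′ are two such solutions with |θ| < s and |θ′| < s, then θ′ = θ or θ′ = −θ. -/

import Mathlib

open Filter Metric Topology

/-- The classical "complexified position" `a(x,p)` for the sphere of radius `r`:
`a(x,p) = cosh(j/(mωr²)) x + i (r²/j) sinh(j/(mωr²)) p` with `j = r|p|`, and `a(x,0) = x`. -/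
noncomputable def aFun {n : ℕ} (m ω r : ℝ) (x p : Fin n → ℝ) : Fin n → ℂ :=
  if p = 0 then fun i => (x i : ℂ)
  else fun i =>
    (↑(Real.cosh (r * Real.sqrt (∑ j, p j ^ 2) / (m * ω * r ^ 2)) * x i) : ℂ) +
      Complex.I *
        (↑((r ^ 2 / (r * Real.sqrt (∑ j, p j ^ 2))) *
            Real.sinh (r * Real.sqrt (∑ j, p j ^ 2) / (m * ω * r ^ 2)) * p i) : ℂ)

/-- The point `x̃ = (x, √(r² − x²))` on the sphere of radius `r`. -/
noncomputable def tildeX {d : ℕ} (r : ℝ) (x : Fin d → ℝ) : Fin (d + 1) → ℝ :=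
  Fin.snoc x (Real.sqrt (r ^ 2 - ∑ i, x i ^ 2))

/-- The tangent vector `p̃ = (p, −(p·x)/√(r² − x²))`. -/
noncomputable def tildeP {d : ℕ} (r : ℝ) (x p : Fin d → ℝ) : Fin (d + 1) → ℝ :=
  Fin.snoc p (-(∑ i, p i * x i) / Real.sqrt (r ^ 2 - ∑ i, x i ^ 2))

lemma cos_inj_upto_sign {θ θ' : ℂ} (hθ : ‖θ‖ < Real.pi)
    (hθ' : ‖θ'‖ < Real.pi) (h : Complex.cos θ' = Complex.cos θ) :
    θ' = θ ∨ θ' = -θ := by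
  have hπ := Real.pi_pos
  rcases Complex.cos_eq_cos_iff.1 h with ⟨k, hk | hk⟩ <;>
  [ (have hsub : θ - θ' = 2 * (k:ℂ) * (Real.pi:ℂ) := by rw [hk]; ring);
    (have hsub : θ + θ' = 2 * (k:ℂ) * (Real.pi:ℂ) := by rw [hk]; ring)] <;>
  · have habs : ‖2 * (k:ℂ) * (Real.pi:ℂ)‖ = 2 * |(k:ℝ)| * Real.pi := by
      rw [norm_mul, norm_mul]
      simp [abs_of_pos hπ]
    have hlt : ‖2 * (k:ℂ) * (Real.pi:ℂ)‖ < 2 * Real.pi := by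
      rw [← hsub]
      calc ‖_‖ ≤ ‖θ‖ + ‖θ'‖ := by
            first
            | simpa using norm_sub_le θ θ'
            | simpa using norm_add_le θ θ'
        _ < 2 * Real.pi := by linarith
    rw [habs] at hlt
    have : |(k:ℝ)| < 1 := by nlinarith [abs_nonneg (k:ℝ)]
    have hk1 : |k| < 1 := by exact_mod_cast (by push_cast; exact this : (|k| : ℝ) < 1)
    have hk0 : k = 0 := by rw [abs_lt] at hk1; omega
    subst hk0
    simp only [Int.cast_zero, mul_zero, zero_mul] at hsub
    first
    | exact Or.inl (by linear_combination -hsub)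
    | exact Or.inr (by linear_combination hsub)

lemma exists_cos_eq_near_one {s : ℝ} (hs : 0 < s) :
    ∃ ε > 0, ∀ w : ℂ, ‖w - 1‖ < ε →
      ∃ θ : ℂ, ‖θ‖ < s ∧ Complex.cos θ = w := by
  have hA : AnalyticAt ℂ Complex.cos 0 := Complex.differentiable_cos.analyticAt 0
  rcases hA.eventually_constant_or_nhds_le_map_nhds with h | h
  · exfalso
    rw [Metric.eventually_nhds_iff] at h
    obtain ⟨δ, hδ, hδ'⟩ := h
    have hz0 : (0:ℝ) < min (δ/2) 1 := lt_min (by linarith) one_pos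
    have hz1 : min (δ/2) 1 ≤ 1 := min_le_right _ _
    have hmem : dist ((min (δ/2) 1 : ℝ) : ℂ) 0 < δ := by
      rw [Complex.dist_eq, sub_zero, Complex.norm_real, Real.norm_eq_abs, abs_of_pos hz0]
      exact lt_of_le_of_lt (min_le_left _ _) (by linarith)
    have h1 := hδ' hmem
    rw [Complex.cos_zero] at h1
    rcases Complex.cos_eq_one_iff.1 h1 with ⟨k, hk⟩
    have hk' : (k:ℝ) * (2 * Real.pi) = min (δ/2) 1 := by exact_mod_cast hk
    have hπ := Real.pi_gt_three
    rcases le_or_gt k 0 with hk0 | hk0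
    · have : (k:ℝ) ≤ 0 := by exact_mod_cast hk0
      nlinarith
    · have : (1:ℝ) ≤ (k:ℝ) := by exact_mod_cast hk0
      nlinarith
  · rw [Complex.cos_zero] at h
    have hmem : Complex.cos '' Metric.ball 0 s ∈ map Complex.cos (𝓝 0) :=
      Filter.mem_map.2 (mem_of_superset (Metric.ball_mem_nhds 0 hs)
        (Set.subset_preimage_image _ _))
    have h2 := h hmem
    rw [Metric.mem_nhds_iff] at h2
    obtain ⟨ε, hε, hsub⟩ := h2
    refine ⟨ε, hε, fun w hw => ?_⟩
    obtain ⟨θ, hθ, hcos⟩ := hsub (show w ∈ ball (1:ℂ) ε by rwa [mem_ball, Complex.dist_eq])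
    exact ⟨θ, by simpa [mem_ball, Complex.dist_eq] using hθ, hcos⟩

lemma sum_aFun_mul_of_ne {n : ℕ} (m ω r : ℝ) (xt pt yt : Fin n → ℝ) (hpt : pt ≠ 0) :
    (∑ i, aFun m ω r xt pt i * (yt i : ℂ)) =
      (↑(Real.cosh (r * Real.sqrt (∑ j, pt j ^ 2) / (m * ω * r ^ 2)) * ∑ i, xt i * yt i) : ℂ) +
      (↑((r ^ 2 / (r * Real.sqrt (∑ j, pt j ^ 2))) *
          Real.sinh (r * Real.sqrt (∑ j, pt j ^ 2) / (m * ω * r ^ 2)) * ∑ i, pt i * yt i) : ℂ) *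
        Complex.I := by
  simp only [aFun, if_neg hpt]
  push_cast [Finset.mul_sum]
  rw [Finset.sum_mul, ← Finset.sum_add_distrib]
  exact Finset.sum_congr rfl fun i _ => by push_cast; ring

lemma sum_aFun_mul_of_eq {n : ℕ} (m ω r : ℝ) (xt yt : Fin n → ℝ) :
    (∑ i, aFun m ω r xt 0 i * (yt i : ℂ)) = (↑(∑ i, xt i * yt i) : ℂ) := by
  simp only [aFun, if_pos rfl]
  push_cast
  rfl

lemma tildeX_sq_sum {d : ℕ} {r : ℝ} (x : Fin d → ℝ) (h : ∑ i, x i ^ 2 ≤ r ^ 2) :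
    ∑ i, (tildeX r x i) ^ 2 = r ^ 2 := by
  have h0 : (0:ℝ) ≤ r ^ 2 - ∑ i, x i ^ 2 := by linarith
  rw [Fin.sum_univ_castSucc]
  simp only [tildeX, Fin.snoc_castSucc, Fin.snoc_last, Real.sq_sqrt h0]
  ring

lemma tildeX_mul_sum {d : ℕ} (r : ℝ) (x y : Fin d → ℝ) :
    ∑ i, tildeX r x i * tildeX r y i =
      (∑ i, x i * y i) +
        Real.sqrt (r ^ 2 - ∑ i, x i ^ 2) * Real.sqrt (r ^ 2 - ∑ i, y i ^ 2) := by
  rw [Fin.sum_univ_castSucc]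
  simp only [tildeX, Fin.snoc_castSucc, Fin.snoc_last]

lemma tildeP_sq_sum {d : ℕ} {r : ℝ} (x p : Fin d → ℝ) (h : 0 ≤ r ^ 2 - ∑ i, x i ^ 2) :
    ∑ i, (tildeP r x p i) ^ 2 =
      (∑ i, p i ^ 2) + (∑ i, p i * x i) ^ 2 / (r ^ 2 - ∑ i, x i ^ 2) := by
  rw [Fin.sum_univ_castSucc]
  simp only [tildeP, Fin.snoc_castSucc, Fin.snoc_last, neg_div, neg_sq, div_pow,
    Real.sq_sqrt h]

set_option maxHeartbeats 1000000 in
theorem exists_unique_upto_sign_angle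
    (d : ℕ) (hd : 0 < d) (m ω : ℝ) (hm : 0 < m) (hω : 0 < ω)
    (x0 p0 : Fin d → ℝ) (K : Set (Fin d → ℝ)) (hK : IsCompact K)
    (s : ℝ) (hs : 0 < s) (hsπ : s < Real.pi) :
    ∀ᶠ r : ℝ in atTop, ∀ x ∈ K,
      (∃ θ : ℂ, ‖θ‖ < s ∧
          Complex.cos θ =
            (((r : ℂ)) ^ 2)⁻¹ *
              ∑ i, aFun m ω r (tildeX r x0) (tildeP r x0 p0) i * (tildeX r x i : ℂ)) ∧
      (∀ θ θ' : ℂ, ‖θ‖ < s → ‖θ'‖ < s →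
          Complex.cos θ =
            (((r : ℂ)) ^ 2)⁻¹ *
              ∑ i, aFun m ω r (tildeX r x0) (tildeP r x0 p0) i * (tildeX r x i : ℂ) →
          Complex.cos θ' =
            (((r : ℂ)) ^ 2)⁻¹ *
              ∑ i, aFun m ω r (tildeX r x0) (tildeP r x0 p0) i * (tildeX r x i : ℂ) →
          θ' = θ ∨ θ' = -θ) := by
  obtain ⟨ε, hε, hball⟩ := exists_cos_eq_near_one hs
  obtain ⟨M, hM⟩ := hK.isBounded.subset_closedBall 0
  set S0 : ℝ := ∑ i, x0 i ^ 2 with hS0def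
  set P0 : ℝ := ∑ i, p0 i ^ 2 with hP0def
  set D : ℝ := ∑ i, p0 i * x0 i with hDdef
  set B : ℝ := max (max ((d:ℝ) * M ^ 2) S0) 1 with hBdef
  set C : ℝ := Real.sqrt (P0 + D ^ 2) with hCdef
  clear_value S0 P0 D B C
  have hB1 : (1:ℝ) ≤ B := by rw [hBdef]; exact le_max_right _ _
  have hS0B : S0 ≤ B := by rw [hBdef]; exact le_trans (le_max_right _ _) (le_max_left _ _)
  have hC0 : 0 ≤ C := by rw [hCdef]; exact Real.sqrt_nonneg _
  have hmω : 0 < m * ω := mul_pos hm hω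
  have hKB : ∀ x ∈ K, ∑ i, x i ^ 2 ≤ B := by
    intro x hx
    have hxM : ‖x‖ ≤ M := by
      have := hM hx; rwa [mem_closedBall, dist_zero_right] at this
    have h1 : ∑ i, x i ^ 2 ≤ ∑ _i : Fin d, M ^ 2 := by
      apply Finset.sum_le_sum; intro i _
      have h2 : |x i| ≤ M := le_trans (norm_le_pi_norm x i) hxM
      calc x i ^ 2 = |x i| ^ 2 := (sq_abs _).symm
        _ ≤ M ^ 2 := by nlinarith [abs_nonneg (x i)]
    calc ∑ i, x i ^ 2 ≤ (d:ℝ) * M ^ 2 := by simpa using h1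
      _ ≤ B := by rw [hBdef]; exact le_trans (le_max_left _ _) (le_max_left _ _)
  -- the dominating function tends to 0
  have hgt : Tendsto (fun r : ℝ => Real.cosh (C/(m*ω*r)) * (2*B/r^2)
      + (Real.cosh (C/(m*ω*r)) - 1) + Real.sinh (C/(m*ω*r))) atTop (𝓝 0) := by
    have hy : Tendsto (fun r:ℝ => C/(m*ω*r)) atTop (𝓝 0) := by
      have e : (fun r:ℝ => C/(m*ω*r)) = fun r => (C/(m*ω)) * r⁻¹ := by
        funext r; rw [← div_div, div_eq_mul_inv]
      rw [e]
      simpa using tendsto_inv_atTop_zero.const_mul (C/(m*ω))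
    have hcosh : Tendsto (fun r:ℝ => Real.cosh (C/(m*ω*r))) atTop (𝓝 1) := by
      have := (Real.continuous_cosh.tendsto 0).comp hy
      simpa [Function.comp_def] using this
    have hsinh : Tendsto (fun r:ℝ => Real.sinh (C/(m*ω*r))) atTop (𝓝 0) := by
      have := (Real.continuous_sinh.tendsto 0).comp hy
      simpa [Function.comp_def] using this
    have h2B : Tendsto (fun r:ℝ => 2*B/r^2) atTop (𝓝 0) := by
      have h1 : Tendsto (fun x:ℝ => x^2) atTop atTop := tendsto_pow_atTop two_ne_zero
      have h2 := h1.inv_tendsto_atTop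
      simpa [div_eq_mul_inv, Function.comp] using h2.const_mul (2*B)
    have := ((hcosh.mul h2B).add (hcosh.sub
      (tendsto_const_nhds : Tendsto (fun _ : ℝ => (1:ℝ)) atTop (𝓝 1)))).add hsinh
    simpa using this
  have hgev := hgt.eventually_lt_const hε
  filter_upwards [eventually_ge_atTop (B+1), hgev] with r hrB hgr
  intro x hx
  have hr0 : (0:ℝ) < r := by linarith
  have hr2 : B + 1 ≤ r ^ 2 := by nlinarith [hrB, hB1, sq_nonneg (r - 1)]
  have hrsq : (0:ℝ) < r^2 := by positivity
  have hSx : ∑ i, x i ^ 2 ≤ B := hKB x hx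
  have hx0r : ∑ i, (tildeX r x0 i)^2 = r^2 := tildeX_sq_sum x0 (by rw [← hS0def]; linarith)
  have hxr : ∑ i, (tildeX r x i)^2 = r^2 := tildeX_sq_sum x (by linarith)
  set X : ℝ := ∑ i, tildeX r x0 i * tildeX r x i with hXdef
  clear_value X
  have hCS : X^2 ≤ r^2 * r^2 := by
    rw [hXdef]
    have h := Finset.sum_mul_sq_le_sq_mul_sq Finset.univ (tildeX r x0) (tildeX r x)
    rwa [hx0r, hxr] at h
  have hXle : X ≤ r^2 := by nlinarith [hCS, hrsq, sq_nonneg (X - r^2), sq_nonneg (X + r^2)]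
  have hS0n : 0 ≤ S0 := by rw [hS0def]; exact Finset.sum_nonneg fun i _ => sq_nonneg _
  have hSxn : 0 ≤ ∑ i, x i ^ 2 := Finset.sum_nonneg fun i _ => sq_nonneg _
  have hXge : r^2 - 2*B ≤ X := by
    rw [hXdef, tildeX_mul_sum, ← hS0def]
    have hin : (∑ i, x0 i * x i)^2 ≤ S0 * (∑ i, x i ^ 2) := by
      simpa [hS0def] using Finset.sum_mul_sq_le_sq_mul_sq Finset.univ x0 x
    have h1 : -B ≤ ∑ i, x0 i * x i := by
      nlinarith [hin, hS0B, hSx, hS0n, hSxn, hB1, sq_nonneg ((∑ i, x0 i * x i) + B)]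
    have h2 : r^2 - B ≤ Real.sqrt (r^2 - S0) * Real.sqrt (r^2 - ∑ i, x i ^ 2) := by
      rw [← Real.sqrt_mul (by linarith)]
      have h3 : (r^2 - B)^2 ≤ (r^2 - S0) * (r^2 - ∑ i, x i ^ 2) := by
        have h4 := mul_le_mul (show r^2 - B ≤ r^2 - S0 by linarith)
          (show r^2 - B ≤ r^2 - ∑ i, x i ^ 2 by linarith) (by linarith) (by linarith)
        nlinarith [h4]
      calc r^2 - B = Real.sqrt ((r^2-B)^2) := (Real.sqrt_sq (by linarith)).symm
        _ ≤ _ := Real.sqrt_le_sqrt h3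
    linarith
  have hXabs : |X / r^2 - 1| ≤ 2*B/r^2 := by
    have e1 : X/r^2 ≤ 1 := (div_le_one hrsq).2 hXle
    have e2 : (r^2 - 2*B)/r^2 ≤ X/r^2 := (div_le_div_iff_of_pos_right hrsq).2 hXge
    have e3 : (r^2 - 2*B)/r^2 = 1 - 2*B/r^2 := by field_simp
    have h2B : (0:ℝ) ≤ 2*B/r^2 := by positivity
    rw [abs_le]; constructor <;> [linarith [e3 ▸ e2]; linarith]
  have hcosh1y : 1 ≤ Real.cosh (C/(m*ω*r)) := Real.one_le_cosh _
  have hy0 : 0 ≤ C/(m*ω*r) := div_nonneg hC0 (by positivity)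
  have hsinh0y : 0 ≤ Real.sinh (C/(m*ω*r)) := Real.sinh_nonneg_iff.2 hy0
  have key : ‖(((r : ℂ)) ^ 2)⁻¹ *
      (∑ i, aFun m ω r (tildeX r x0) (tildeP r x0 p0) i * (tildeX r x i : ℂ)) - 1‖ < ε := by
    rcases eq_or_ne p0 0 with hp0 | hp0
    · subst hp0
      have hpt0 : tildeP r x0 0 = 0 := by
        funext i
        refine Fin.lastCases ?_ (fun j => ?_) i <;> simp [tildeP]
      rw [hpt0, sum_aFun_mul_of_eq, ← hXdef]
      have e : ((r:ℂ)^2)⁻¹ * (X:ℂ) - 1 = ((X / r^2 - 1 : ℝ) : ℂ) := by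
        have hrC : (r:ℂ) ≠ 0 := Complex.ofReal_ne_zero.2 hr0.ne'
        push_cast
        field_simp
      rw [e, Complex.norm_real, Real.norm_eq_abs]
      calc |X / r^2 - 1| ≤ 2*B/r^2 := hXabs
        _ ≤ Real.cosh (C/(m*ω*r)) * (2*B/r^2) + (Real.cosh (C/(m*ω*r)) - 1)
            + Real.sinh (C/(m*ω*r)) := by
              have h2B : (0:ℝ) ≤ 2*B/r^2 := by positivity
              have := mul_le_mul_of_nonneg_right hcosh1y h2B
              linarith
        _ < ε := hgr
    · have hpt : tildeP r x0 p0 ≠ 0 := by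
        obtain ⟨i0, hi0⟩ := Function.ne_iff.1 hp0
        intro hcon
        apply hi0
        have := congrFun hcon (Fin.castSucc i0)
        simpa [tildeP] using this
      rw [sum_aFun_mul_of_ne m ω r _ _ _ hpt, ← hXdef]
      set t : ℝ := Real.sqrt (∑ j, tildeP r x0 p0 j ^ 2) with htdef
      set c : ℝ := r * t / (m * ω * r ^ 2) with hcdef
      set P : ℝ := ∑ i, tildeP r x0 p0 i * tildeX r x i with hPdef
      clear_value t c P
      have hsum0 : 0 ≤ ∑ j, tildeP r x0 p0 j ^ 2 := Finset.sum_nonneg fun i _ => sq_nonneg _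
      have ht0 : 0 < t := by
        rw [htdef, Real.sqrt_pos]
        obtain ⟨i0, hi0⟩ := Function.ne_iff.1 hp0
        have h1 : (tildeP r x0 p0 (Fin.castSucc i0))^2 ≤ ∑ j, tildeP r x0 p0 j ^ 2 :=
          Finset.single_le_sum (f := fun j => tildeP r x0 p0 j ^ 2)
            (fun i _ => sq_nonneg _) (Finset.mem_univ _)
        have h2 : (tildeP r x0 p0 (Fin.castSucc i0))^2 = (p0 i0)^2 := by simp [tildeP]
        have h3 : 0 < (p0 i0)^2 := by
          have := abs_pos.2 hi0
          calc (0:ℝ) < |p0 i0|^2 := by positivity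
            _ = (p0 i0)^2 := sq_abs _
        linarith [h2 ▸ h1]
      have htt : t^2 = ∑ j, tildeP r x0 p0 j ^ 2 := by rw [htdef]; exact Real.sq_sqrt hsum0
      have htC : t ≤ C := by
        rw [htdef, hCdef]
        apply Real.sqrt_le_sqrt
        rw [tildeP_sq_sum x0 p0 (by rw [← hS0def]; linarith), ← hS0def, ← hP0def, ← hDdef]
        have hd2 : D^2/(r^2 - S0) ≤ D^2 := div_le_self (sq_nonneg D) (by linarith)
        linarith
      have hc0 : 0 ≤ c := by
        rw [hcdef]
        exact div_nonneg (mul_nonneg hr0.le ht0.le)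
          (mul_nonneg (mul_nonneg hm.le hω.le) (sq_nonneg r))
      have hcy : c ≤ C/(m*ω*r) := by
        have e : c = t/(m*ω*r) := by rw [hcdef]; field_simp
        rw [e]
        exact (div_le_div_iff_of_pos_right (mul_pos hmω hr0)).2 htC
      have hcoshc : Real.cosh c ≤ Real.cosh (C/(m*ω*r)) :=
        Real.cosh_le_cosh.2 (by rw [abs_of_nonneg hc0, abs_of_nonneg hy0]; exact hcy)
      have hsinhc : Real.sinh c ≤ Real.sinh (C/(m*ω*r)) := Real.sinh_le_sinh.2 hcy
      have hsinh0 : 0 ≤ Real.sinh c := Real.sinh_nonneg_iff.2 hc0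
      have hcosh1 : 1 ≤ Real.cosh c := Real.one_le_cosh c
      have hPabs : |P| ≤ t * r := by
        have hCS2 : P^2 ≤ (∑ j, tildeP r x0 p0 j ^ 2) * (∑ i, (tildeX r x i)^2) := by
          simpa [hPdef] using
            Finset.sum_mul_sq_le_sq_mul_sq Finset.univ (tildeP r x0 p0) (tildeX r x)
        rw [hxr, ← htt] at hCS2
        have h5 : P^2 ≤ (t*r)^2 := by rw [mul_pow]; exact hCS2
        calc |P| = Real.sqrt (P^2) := (Real.sqrt_sq_eq_abs P).symm
          _ ≤ Real.sqrt ((t*r)^2) := Real.sqrt_le_sqrt h5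
          _ = t*r := Real.sqrt_sq (mul_nonneg ht0.le hr0.le)
      set β : ℝ := r ^ 2 / (r * t) * Real.sinh c with hβdef
      clear_value β
      have hβ0 : 0 ≤ β := by
        rw [hβdef]
        exact mul_nonneg (div_nonneg (sq_nonneg r) (mul_nonneg hr0.le ht0.le)) hsinh0
      have hw : ((r:ℂ)^2)⁻¹ * ((↑(Real.cosh c * X):ℂ) + (↑(β * P):ℂ) * Complex.I) - 1
          = ((Real.cosh c * X / r^2 - 1 : ℝ):ℂ) + ((β * P / r^2 : ℝ):ℂ) * Complex.I := by
        have hrC : (r:ℂ) ≠ 0 := Complex.ofReal_ne_zero.2 hr0.ne'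
        push_cast
        field_simp
        ring
      rw [hw]
      have habs : ‖((Real.cosh c * X / r^2 - 1 : ℝ):ℂ)
          + ((β * P / r^2 : ℝ):ℂ) * Complex.I‖
          ≤ |Real.cosh c * X / r^2 - 1| + |β * P / r^2| := by
        calc ‖_‖ ≤ ‖((Real.cosh c * X / r^2 - 1 : ℝ):ℂ)‖
              + ‖((β * P / r^2 : ℝ):ℂ) * Complex.I‖ := norm_add_le _ _
          _ = |Real.cosh c * X / r^2 - 1| + |β * P / r^2| := by
              rw [norm_mul, Complex.norm_I, mul_one, Complex.norm_real, Complex.norm_real, Real.norm_eq_abs,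
                  Real.norm_eq_abs]
      have hre : |Real.cosh c * X / r^2 - 1|
          ≤ Real.cosh (C/(m*ω*r)) * (2*B/r^2) + (Real.cosh (C/(m*ω*r)) - 1) := by
        have e : Real.cosh c * X / r^2 - 1
            = Real.cosh c * (X/r^2 - 1) + (Real.cosh c - 1) := by ring
        rw [e]
        have t1 : |Real.cosh c * (X/r^2 - 1)| ≤ Real.cosh (C/(m*ω*r)) * (2*B/r^2) := by
          rw [abs_mul, abs_of_nonneg (by linarith : (0:ℝ) ≤ Real.cosh c)]
          exact mul_le_mul hcoshc hXabs (abs_nonneg _) (by linarith)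
        have t2 : |Real.cosh c - 1| ≤ Real.cosh (C/(m*ω*r)) - 1 := by
          rw [abs_of_nonneg (by linarith)]; linarith
        calc |_| ≤ |Real.cosh c * (X/r^2 - 1)| + |Real.cosh c - 1| := abs_add_le _ _
          _ ≤ _ := add_le_add t1 t2
      have him : |β * P / r^2| ≤ Real.sinh (C/(m*ω*r)) := by
        have e1 : |β * P / r^2| = β * |P| / r^2 := by
          rw [abs_div, abs_mul, abs_of_nonneg hβ0, abs_of_nonneg hrsq.le]
        rw [e1]
        have h1 : β * |P| ≤ β * (t * r) := mul_le_mul_of_nonneg_left hPabs hβ0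
        have h2 : β * (t*r) = Real.sinh c * r^2 := by
          rw [hβdef]; field_simp
        calc β * |P| / r^2 ≤ Real.sinh c * r^2 / r^2 :=
              (div_le_div_iff_of_pos_right hrsq).2 (by linarith)
          _ = Real.sinh c := by field_simp
          _ ≤ _ := hsinhc
      calc ‖_‖ ≤ |Real.cosh c * X / r^2 - 1| + |β * P / r^2| := habs
        _ ≤ Real.cosh (C/(m*ω*r)) * (2*B/r^2) + (Real.cosh (C/(m*ω*r)) - 1)
            + Real.sinh (C/(m*ω*r)) := by linarith
        _ < ε := hgr
  refine ⟨?_, ?_⟩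
  · obtain ⟨θ, h1, h2⟩ := hball _ key
    exact ⟨θ, h1, h2⟩
  · intro θ θ' h1 h2 e1 e2
    exact cos_inj_upto_sign (h1.trans hsπ) (h2.trans hsπ) (e2.trans e1.symm)
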